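/- Let η ∈ (0,1], θ ≥ 0, and φ : ℝ → ℝ monotone increasing. Then it is impossible that both clamp(φ(-θ/η),0,P) > 0 and clamp(-φ(-θη),0,P) > 0, i.e., the policy never simultaneously charges and discharges when the Lagrangian multiplier θ is nonnegative. -/
import Mathlib


theorem stmt6 (η P θ : ℝ) (φ : ℝ → ℝ) (hη : η ∈ Set.Ioc (0:ℝ) 1) (hP : 0 < P)
    (hθ : 0 ≤ θ) (hφ : Monotone φ) :
    ¬(0 < max 0 (min (φ (-θ / η)) P) ∧ 0 < max 0 (min (-φ (-θ * η)) P)) := by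
  rintro ⟨h1, h2⟩
  obtain ⟨hη0, hη1⟩ := hη
  have a1 : 0 < φ (-θ / η) := lt_of_lt_of_le (by simpa using h1) (min_le_left _ _)
  have a2 : 0 < -φ (-θ * η) := lt_of_lt_of_le (by simpa using h2) (min_le_left _ _)
  have hle : -θ / η ≤ -θ * η := by
    rw [div_le_iff₀ hη0]
    nlinarith [mul_le_one₀ hη1 hη0.le hη1]
  have := hφ hle
  linarith
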